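/- arXiv:1808.02253 — 5 statements merged into one kernel-verified Lean document; each statement's English description precedes it below -/
import Mathlib

section
/- Let n be a nonempty finite type, 0 < α < 1, and A an n×n real matrix. Suppose x₀ ∈ ℝ^n is nonzero and for some T > 0 the trajectory satisfies E_α(T^α • A) · x₀ = 0. Then there exist an eigenvalue λ ∈ spectrum ℂ A_ℂ of the complexification A_ℂ of A and a ζ ∈ ℂ with E_α(ζ) = 0 such that λ = ζ / T^α (in particular arg(λ) = arg(ζ)). -/
open Real Filter

/-- The Mittag-Leffler function `E_α(z) = ∑ z^k / Γ(αk+1)`. -/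
noncomputable def mlE (α : ℝ) (z : ℂ) : ℂ :=
  ∑' k : ℕ, ((Real.Gamma (α * k + 1) : ℂ))⁻¹ * z ^ k

/-- The Mittag-Leffler matrix function `E_α(A) = ∑ A^k / Γ(αk+1)` of a real matrix. -/
noncomputable def mlMatR (α : ℝ) {n : Type*} [Fintype n] [DecidableEq n]
    (A : Matrix n n ℝ) : Matrix n n ℝ :=
  ∑' k : ℕ, (Real.Gamma (α * k + 1))⁻¹ • A ^ k

set_option linter.unusedSectionVars false

lemma gamma_convex_ineq {α x : ℝ} (hα0 : 0 < α) (hα1 : α ≤ 1) (hx : 0 < x) :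
    (x + α) ^ α * Real.Gamma (x + 1) ≤ Real.Gamma (x + α + 1) := by
  have hxα : 0 < x + α := by linarith
  have h1 : (x + α) ∈ Set.Ioi (0:ℝ) := hxα
  have h2 : (x + α + 1) ∈ Set.Ioi (0:ℝ) := by simp [Set.mem_Ioi]; linarith
  have key := Real.convexOn_log_Gamma.2 h1 h2 (le_of_lt hα0) (by linarith : (0:ℝ) ≤ 1 - α)
    (by ring)
  have harg : α • (x + α) + (1 - α) • (x + α + 1) = x + 1 := by
    simp only [smul_eq_mul]; ring
  rw [harg] at key
  -- key : log (Γ (x+1)) ≤ α * log (Γ (x+α)) + (1-α) * log (Γ (x+α+1))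
  simp only [Function.comp_apply, smul_eq_mul] at key
  have hΓxα : 0 < Real.Gamma (x + α) := Real.Gamma_pos_of_pos hxα
  have hΓx1 : 0 < Real.Gamma (x + 1) := Real.Gamma_pos_of_pos (by linarith)
  have hrec : Real.Gamma (x + α + 1) = (x + α) * Real.Gamma (x + α) :=
    Real.Gamma_add_one (ne_of_gt hxα)
  rw [hrec, Real.log_mul (ne_of_gt hxα) (ne_of_gt hΓxα)] at key
  -- now key : log Γ(x+1) ≤ α log Γ(x+α) + (1-α)(log(x+α) + log Γ(x+α))
  have key2 : Real.log (Real.Gamma (x+1)) ≤ Real.log (Real.Gamma (x+α)) +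
      (1 - α) * Real.log (x + α) := by nlinarith [key]
  have hexp : Real.Gamma (x+1) ≤ Real.Gamma (x+α) * (x+α) ^ (1-α) := by
    have := Real.exp_le_exp.2 key2
    rw [Real.exp_log hΓx1, Real.exp_add, Real.exp_log hΓxα] at this
    rwa [Real.rpow_def_of_pos hxα, mul_comm (Real.log (x+α))]
  calc (x + α) ^ α * Real.Gamma (x + 1)
      ≤ (x + α) ^ α * (Real.Gamma (x+α) * (x+α) ^ (1-α)) := by
        apply mul_le_mul_of_nonneg_left hexp (Real.rpow_nonneg hxα.le _)
    _ = (x + α) * Real.Gamma (x + α) := by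
        rw [mul_comm (Real.Gamma (x+α)), ← mul_assoc, ← Real.rpow_add hxα]
        norm_num
    _ = Real.Gamma (x + α + 1) := hrec.symm



lemma ml_scalar_summable {α : ℝ} (hα0 : 0 < α) (hα1 : α ≤ 1) {r : ℝ} (hr : 0 ≤ r) :
    Summable (fun k : ℕ => (Real.Gamma (α * k + 1))⁻¹ * r ^ k) := by
  have hΓ : ∀ k : ℕ, 0 < Real.Gamma (α * k + 1) := fun k =>
    Real.Gamma_pos_of_pos (by positivity)
  apply summable_of_ratio_norm_eventually_le (r := 1/2) (by norm_num)
  have htends : Tendsto (fun k : ℕ => (α * k + α) ^ α) atTop atTop := by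
    apply (tendsto_rpow_atTop hα0).comp
    apply Filter.tendsto_atTop_add_const_right
    exact (tendsto_natCast_atTop_atTop (R := ℝ)).const_mul_atTop hα0
  filter_upwards [htends.eventually_ge_atTop (2 * r), eventually_ge_atTop 1] with k hk hk1
  have hΓ1 := hΓ k
  have hΓ2 := hΓ (k + 1)
  have hxk : 0 < α * k := by
    have : (1:ℝ) ≤ (k:ℝ) := by exact_mod_cast hk1
    nlinarith
  have harg : α * ((k:ℕ):ℝ) + α + 1 = α * ((k+1 : ℕ):ℝ) + 1 := by push_cast; ring
  have hkey : 2 * r * Real.Gamma (α * k + 1) ≤ Real.Gamma (α * (k+1:ℕ) + 1) := by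
    have h1 : (α * k + α) ^ α * Real.Gamma (α * k + 1) ≤ Real.Gamma (α * k + α + 1) :=
      gamma_convex_ineq hα0 hα1 hxk
    rw [harg] at h1
    calc 2 * r * Real.Gamma (α * k + 1) ≤ (α * k + α) ^ α * Real.Gamma (α * k + 1) :=
          mul_le_mul_of_nonneg_right hk hΓ1.le
      _ ≤ _ := h1
  rw [Real.norm_of_nonneg (by positivity), Real.norm_of_nonneg (by positivity)]
  rcases eq_or_lt_of_le hr with h0 | hrpos
  · simp [pow_succ, ← h0]
    positivity
  · have h2r : 0 < 2 * r * Real.Gamma (α * k + 1) := by positivity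
    have hinv : (Real.Gamma (α * (k+1:ℕ) + 1))⁻¹ ≤ (2 * r * Real.Gamma (α * k + 1))⁻¹ :=
      inv_anti₀ h2r hkey
    calc (Real.Gamma (α * (k+1:ℕ) + 1))⁻¹ * r ^ (k+1)
        ≤ (2 * r * Real.Gamma (α * k + 1))⁻¹ * r ^ (k+1) := by
          apply mul_le_mul_of_nonneg_right hinv (by positivity)
      _ = 1 / 2 * ((Real.Gamma (α * k + 1))⁻¹ * r ^ k) := by
          rw [pow_succ]
          field_simp


/-- The ML series in any real normed algebra. -/
lemma ml_summable_normed {α : ℝ} (hα0 : 0 < α) (hα1 : α ≤ 1) {𝔸 : Type*} [NormedRing 𝔸]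
    [NormedSpace ℝ 𝔸] [CompleteSpace 𝔸] (x : 𝔸) :
    Summable (fun k : ℕ => (Real.Gamma (α * k + 1))⁻¹ • x ^ k) := by
  have hΓ : ∀ k : ℕ, 0 < Real.Gamma (α * k + 1) := fun k =>
    Real.Gamma_pos_of_pos (by positivity)
  apply Summable.of_norm_bounded
    (g := fun k : ℕ => max 1 ‖(1:𝔸)‖ * ((Real.Gamma (α * k + 1))⁻¹ * ‖x‖ ^ k))
    (((ml_scalar_summable hα0 hα1 (norm_nonneg x)).mul_left _))
  intro k
  have h1 : ‖x ^ k‖ ≤ max 1 ‖(1:𝔸)‖ * ‖x‖ ^ k := by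
    rcases Nat.eq_zero_or_pos k with rfl | hk
    · simp
    · calc ‖x ^ k‖ ≤ ‖x‖ ^ k := norm_pow_le' x hk
        _ ≤ max 1 ‖(1:𝔸)‖ * ‖x‖ ^ k := by
            nlinarith [pow_nonneg (norm_nonneg x) k, le_max_left 1 ‖(1:𝔸)‖]
  calc ‖(Real.Gamma (α * k + 1))⁻¹ • x ^ k‖ ≤ ‖(Real.Gamma (α * k + 1))⁻¹‖ * ‖x ^ k‖ :=
        norm_smul_le _ _
    _ ≤ (Real.Gamma (α * k + 1))⁻¹ * (max 1 ‖(1:𝔸)‖ * ‖x‖ ^ k) := by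
        rw [Real.norm_of_nonneg (by positivity)]
        exact mul_le_mul_of_nonneg_left h1 (by positivity)
    _ = max 1 ‖(1:𝔸)‖ * ((Real.Gamma (α * k + 1))⁻¹ * ‖x‖ ^ k) := by ring

section Matrix
variable {n : Type*} [Fintype n] [DecidableEq n] {K : Type*} [NormedField K] [NormedAlgebra ℝ K] [CompleteSpace K]

lemma entry_pow_le (X : Matrix n n K) (k : ℕ) (i j : n) :
    ‖(X ^ k) i j‖ ≤ (max 1 (∑ p, ∑ q, ‖X p q‖)) ^ k := by
  set c := max 1 (∑ p, ∑ q, ‖X p q‖) with hc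
  have hc1 : (1:ℝ) ≤ c := le_max_left _ _
  induction k generalizing i j with
  | zero =>
    simp only [pow_zero, Matrix.one_apply]
    split <;> simp
  | succ k ih =>
    rw [pow_succ']
    rw [Matrix.mul_apply]
    calc ‖∑ l, X i l * (X ^ k) l j‖ ≤ ∑ l, ‖X i l * (X ^ k) l j‖ := norm_sum_le _ _
      _ ≤ ∑ l, ‖X i l‖ * c ^ k := by
          apply Finset.sum_le_sum
          intro l _
          calc ‖X i l * (X ^ k) l j‖ ≤ ‖X i l‖ * ‖(X ^ k) l j‖ := norm_mul_le _ _
            _ ≤ ‖X i l‖ * c ^ k := mul_le_mul_of_nonneg_left (ih l j) (norm_nonneg _)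
      _ = (∑ l, ‖X i l‖) * c ^ k := by rw [Finset.sum_mul]
      _ ≤ c * c ^ k := by
          apply mul_le_mul_of_nonneg_right _ (by positivity)
          calc (∑ l, ‖X i l‖) ≤ ∑ p, ∑ q, ‖X p q‖ := by
                apply Finset.single_le_sum (f := fun p => ∑ q, ‖X p q‖)
                  (fun p _ => by positivity) (Finset.mem_univ i)
            _ ≤ c := le_max_right _ _
      _ = c ^ (k + 1) := by rw [pow_succ']

lemma ml_summable_matrix {α : ℝ} (hα0 : 0 < α) (hα1 : α ≤ 1) (X : Matrix n n K) :
    Summable (fun k : ℕ => (Real.Gamma (α * k + 1))⁻¹ • X ^ k) := by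
  have hΓ : ∀ k : ℕ, 0 < Real.Gamma (α * k + 1) := fun k =>
    Real.Gamma_pos_of_pos (by positivity)
  set c := max 1 (∑ p, ∑ q, ‖X p q‖) with hc
  have hc0 : 0 ≤ c := le_trans zero_le_one (le_max_left _ _)
  have : ∀ i j : n, Summable (fun k : ℕ => ((Real.Gamma (α * k + 1))⁻¹ • X ^ k) i j) := by
    intro i j
    apply Summable.of_norm_bounded (g := fun k : ℕ => (Real.Gamma (α * k + 1))⁻¹ * c ^ k)
      (ml_scalar_summable hα0 hα1 hc0)
    intro k
    simp only [Matrix.smul_apply]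
    calc ‖(Real.Gamma (α * k + 1))⁻¹ • (X ^ k) i j‖
        ≤ ‖(Real.Gamma (α * k + 1))⁻¹‖ * ‖(X ^ k) i j‖ := norm_smul_le _ _
      _ ≤ (Real.Gamma (α * k + 1))⁻¹ * c ^ k := by
          rw [Real.norm_of_nonneg (by positivity)]
          exact mul_le_mul_of_nonneg_left (entry_pow_le X k i j) (by positivity)
  exact Pi.summable.mpr fun i => Pi.summable.mpr fun j => this i j

end Matrix


/-- ML series in an arbitrary topological real algebra. -/
noncomputable def mls (α : ℝ) {A : Type*} [Ring A] [TopologicalSpace A] [Module ℝ A]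
    (x : A) : A :=
  ∑' k : ℕ, (Real.Gamma (α * k + 1))⁻¹ • x ^ k

lemma mlMatR_eq_mls (α : ℝ) {n : Type*} [Fintype n] [DecidableEq n] (A : Matrix n n ℝ) :
    mlMatR α A = mls α A := rfl

lemma mlE_eq_mls (α : ℝ) (z : ℂ) : mlE α z = mls α z := by
  unfold mlE mls
  apply tsum_congr
  intro k
  rw [Complex.real_smul, Complex.ofReal_inv]

lemma real_smul_eq_coe_smul {E : Type*} [AddCommMonoid E] [Module ℂ E] [Module ℝ E]
    [IsScalarTower ℝ ℂ E] (r : ℝ) (x : E) : r • x = (r : ℂ) • x := by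
  rw [← smul_one_smul ℂ r x, Complex.real_smul, mul_one]

/-- Transfer `mls` along a continuous ring hom commuting with real scalars. -/
lemma RingHom.map_mls {α : ℝ} {A B : Type*} [Ring A] [Ring B] [TopologicalSpace A]
    [TopologicalSpace B] [T2Space B] [Module ℝ A] [Module ℝ B]
    (g : A →+* B) (hg : Continuous g) (hsm : ∀ (r : ℝ) (x : A), g (r • x) = r • g x)
    {x : A} (hx : Summable fun k : ℕ => (Real.Gamma (α * k + 1))⁻¹ • x ^ k) :
    g (mls α x) = mls α (g x) := by
  have h := (hx.hasSum.map g.toAddMonoidHom hg)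
  have h2 : (fun k : ℕ => g ((Real.Gamma (α * k + 1))⁻¹ • x ^ k)) =
      fun k : ℕ => (Real.Gamma (α * k + 1))⁻¹ • (g x) ^ k := by
    funext k
    rw [hsm, map_pow]
  have h' : HasSum (fun k : ℕ => (Real.Gamma (α * k + 1))⁻¹ • (g x) ^ k) (g (mls α x)) := by
    rw [← h2]
    exact h
  exact (h'.tsum_eq).symm


section Aux
variable {n : Type*} [Fintype n] [DecidableEq n]


/-- Matrices to continuous linear maps, as an algebra equivalence. -/
noncomputable def matCLM : Matrix n n ℂ ≃ₐ[ℂ] ((n → ℂ) →L[ℂ] (n → ℂ)) :=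
  Matrix.toLinAlgEquiv'.trans <|
    AlgEquiv.ofLinearEquiv LinearMap.toContinuousLinearMap
      (by ext; rfl) (fun f g => by ext; rfl)

lemma matCLM_continuous : Continuous (matCLM (n := n)) :=
  LinearMap.continuous_of_finiteDimensional (matCLM (n := n)).toLinearMap

lemma matCLM_symm_continuous : Continuous (matCLM (n := n)).symm :=
  LinearMap.continuous_of_finiteDimensional (matCLM (n := n)).symm.toLinearMap

/-- In a finite-dimensional commutative subalgebra, units of the ambient algebra are units. -/
lemma isUnit_in_subalg {D : Type*} [Ring D] [Algebra ℂ D] (B : Subalgebra ℂ D)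
    [FiniteDimensional ℂ B] (hcomm : ∀ a b : B, a * b = b * a)
    (x : B) (h : IsUnit (x : D)) : IsUnit x := by
  obtain ⟨v, hv⟩ := h
  have hinj : Function.Injective (LinearMap.mulLeft ℂ x) := by
    intro a b hab
    simp only [LinearMap.mulLeft_apply] at hab
    have : (x : D) * a = (x : D) * b := by exact_mod_cast congrArg (Subtype.val) hab
    have h2 : ((v⁻¹ : Dˣ) : D) * ((x : D) * (a : D)) = ((v⁻¹ : Dˣ) : D) * ((x : D) * (b : D)) :=
      by rw [this]
    rw [← mul_assoc, ← mul_assoc, ← hv, Units.inv_mul, one_mul, one_mul] at h2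
    exact Subtype.ext h2
  have hsurj : Function.Surjective (LinearMap.mulLeft ℂ x) :=
    LinearMap.surjective_of_injective hinj
  obtain ⟨u, hu⟩ := hsurj 1
  simp only [LinearMap.mulLeft_apply] at hu
  exact ⟨⟨x, u, hu, by rw [hcomm]; exact hu⟩, rfl⟩

end Aux

set_option maxHeartbeats 2000000 in
set_option synthInstance.maxHeartbeats 1000000 in
theorem trajectory_hits_origin_necessary {n : Type*} [Fintype n] [DecidableEq n] [Nonempty n]
    (α : ℝ) (hα0 : 0 < α) (hα1 : α < 1) (A : Matrix n n ℝ)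
    (x₀ : n → ℝ) (hx₀ : x₀ ≠ 0) (T : ℝ) (hT : 0 < T)
    (hzero : (mlMatR α ((T ^ α) • A)).mulVec x₀ = 0) :
    ∃ lam ∈ spectrum ℂ (A.map Complex.ofReal), ∃ ζ : ℂ, mlE α ζ = 0 ∧
      lam = ζ / ((T ^ α : ℝ) : ℂ) := by
  have hα1' : α ≤ 1 := hα1.le
  set X : Matrix n n ℝ := (T ^ α) • A with hX
  -- determinant vanishes over ℝ
  have detR : (mlMatR α X).det = 0 := by
    by_contra h
    exact hx₀ (Matrix.eq_zero_of_mulVec_eq_zero h hzero)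
  -- complexify
  set Mc : Matrix n n ℂ := A.map Complex.ofReal with hMc
  set c : ℂ := ((T ^ α : ℝ) : ℂ) with hcdef
  have hc0 : c ≠ 0 := by
    simp only [hcdef, ne_eq, Complex.ofReal_eq_zero]
    exact (Real.rpow_pos_of_pos hT α).ne'
  set Mc' : Matrix n n ℂ := c • Mc with hMc'
  have hXmap : X.map Complex.ofReal = Mc' := by
    ext i j
    simp [hX, hMc', hMc, Matrix.map_apply, Matrix.smul_apply, smul_eq_mul]
    exact Or.inl rfl
  have hmapml : (mlMatR α X).map Complex.ofReal = mls α Mc' := by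
    rw [mlMatR_eq_mls, ← hXmap]
    have := RingHom.map_mls ((Complex.ofRealHom.mapMatrix : Matrix n n ℝ →+* Matrix n n ℂ))
      (Continuous.matrix_map continuous_id Complex.continuous_ofReal)
      (fun r x => by
        ext i j
        simp [Matrix.smul_apply, Matrix.map_apply, RingHom.mapMatrix_apply,
          Complex.real_smul, smul_eq_mul])
      (ml_summable_matrix hα0 hα1' X)
    exact this
  have detC : (mls α Mc').det = 0 := by
    have h1 := RingHom.map_det Complex.ofRealHom (mlMatR α X)
    rw [RingHom.mapMatrix_apply, detR, map_zero] at h1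
    rw [← hmapml]
    exact h1.symm
  have hnotunit : ¬ IsUnit (mls α Mc') := by
    rw [Matrix.isUnit_iff_isUnit_det, detC]
    exact not_isUnit_zero
  -- move to continuous linear maps
  set m : (n → ℂ) →L[ℂ] (n → ℂ) := matCLM Mc' with hm
  have hpsi : matCLM (mls α Mc') = mls α m := by
    rw [hm]
    exact RingHom.map_mls (matCLM.toAlgHom.toRingHom) matCLM_continuous
      (fun r x => by
        rw [real_smul_eq_coe_smul, real_smul_eq_coe_smul]
        exact matCLM.toLinearEquiv.map_smul (r : ℂ) x)
      (ml_summable_matrix hα0 hα1' Mc')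
  have hnotunit2 : ¬ IsUnit (mls α m) := by
    intro h
    rw [← hpsi] at h
    have := h.map (matCLM (n := n)).symm.toAlgHom.toRingHom
    apply hnotunit
    simpa using this
  -- the commutative Banach subalgebra generated by m
  haveI : FiniteDimensional ℂ ((n → ℂ) →L[ℂ] (n → ℂ)) := by infer_instance
  set Bsub : Subalgebra ℂ ((n → ℂ) →L[ℂ] (n → ℂ)) := Algebra.adjoin ℂ {m} with hB
  haveI : FiniteDimensional ℂ Bsub := by infer_instance
  letI : NormedRing Bsub := Subalgebra.normedRing Bsub
  letI : NormedAlgebra ℂ Bsub := Subalgebra.toNormedAlgebra Bsub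
  letI : NormedSpace ℝ Bsub := NormedSpace.complexToReal
  haveI : CompleteSpace Bsub := FiniteDimensional.complete ℂ Bsub
  have hcomm : ∀ a b : Bsub, a * b = b * a := by
    intro a b
    have h1 : Commute (a : (n → ℂ) →L[ℂ] (n → ℂ)) (b : (n → ℂ) →L[ℂ] (n → ℂ)) := by
      apply Algebra.commute_of_mem_adjoin_of_forall_mem_commute b.2
      intro y hy
      rw [Set.mem_singleton_iff] at hy
      rw [hy]
      exact (Algebra.commute_of_mem_adjoin_self a.2).symm
    exact Subtype.ext h1
  letI : NormedCommRing Bsub := { (inferInstance : NormedRing Bsub) with mul_comm := hcomm }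
  set mB : Bsub := ⟨m, Algebra.self_mem_adjoin_singleton ℂ m⟩ with hmB
  have hvalml : ((mls α mB : Bsub) : (n → ℂ) →L[ℂ] (n → ℂ)) = mls α m := by
    have := RingHom.map_mls ((Subalgebra.val Bsub).toRingHom) continuous_subtype_val
      (fun r x => by
        rw [real_smul_eq_coe_smul, real_smul_eq_coe_smul]
        exact map_smul (Subalgebra.val Bsub) _ _)
      (ml_summable_normed hα0 hα1' mB)
    exact this
  have hnotunitEB : ¬ IsUnit (mls α mB) := by
    intro h
    apply hnotunit2
    have := h.map (Subalgebra.val Bsub).toRingHom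
    rwa [show (Subalgebra.val Bsub).toRingHom (mls α mB) = mls α m from hvalml] at this
  obtain ⟨φ, hφ⟩ := WeakDual.CharacterSpace.exists_apply_eq_zero hnotunitEB
  set μ0 : ℂ := φ mB with hμ0
  have hφml : φ (mls α mB) = mls α μ0 := by
    have := RingHom.map_mls ((WeakDual.CharacterSpace.equivAlgHom φ).toRingHom)
      (map_continuous φ)
      (fun r x => by
        rw [real_smul_eq_coe_smul, real_smul_eq_coe_smul]
        exact map_smul (WeakDual.CharacterSpace.equivAlgHom φ) _ _)
      (ml_summable_normed hα0 hα1' mB)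
    exact this
  have hmlE0 : mlE α μ0 = 0 := by
    rw [mlE_eq_mls, ← hφml, hφ]
  have hspecB : μ0 ∈ spectrum ℂ mB := AlgHom.apply_mem_spectrum
    (WeakDual.CharacterSpace.equivAlgHom φ) mB
  have hspecD : μ0 ∈ spectrum ℂ m := by
    rw [spectrum.mem_iff] at hspecB ⊢
    intro hU
    apply hspecB
    apply isUnit_in_subalg Bsub hcomm
    have hval2 : ((algebraMap ℂ Bsub μ0 - mB : Bsub) : (n → ℂ) →L[ℂ] (n → ℂ)) =
        algebraMap ℂ ((n → ℂ) →L[ℂ] (n → ℂ)) μ0 - m := by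
      push_cast
      simp
      rfl
    rwa [hval2]
  have hspecMc' : μ0 ∈ spectrum ℂ Mc' := by
    rw [← AlgEquiv.spectrum_eq matCLM Mc']
    exact hspecD
  have hu : Mc' = (Units.mk0 c hc0) • Mc := rfl
  rw [hu, spectrum.unit_smul_eq_smul] at hspecMc'
  obtain ⟨lam, hlam, heq⟩ := hspecMc'
  refine ⟨lam, hlam, μ0, hmlE0, ?_⟩
  have : c * lam = μ0 := heq
  field_simp [← this, mul_comm]
  linear_combination this
end

section
/- Let n be a nonempty finite type, 0 < α < 1, and A an n×n real matrix with complexification A_ℂ. If there exist an eigenvalue λ ∈ spectrum ℂ A_ℂ and a ζ ∈ ℂ with E_α(ζ) = 0 such that arg(λ) = arg(ζ), then there exists T > 0 such that the kernel of E_α(T^α • A) is nontrivial; i.e., there exists x₀ ∈ ℝ^n with x₀ ≠ 0 and E_α(T^α • A) · x₀ = 0 (so the trajectory u(t; x₀) hits the origin at time T). -/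
open Real Filter

lemma mlGammaPos (α : ℝ) (hα : 0 < α) (k : ℕ) : 0 < Real.Gamma (α * k + 1) :=
  Real.Gamma_pos_of_pos (by positivity)

lemma mlGammaRatio (α : ℝ) (hα0 : 0 < α) (hα1 : α < 1) {x : ℝ} (hx : 0 < x) :
    Real.Gamma x * x ≤ Real.Gamma (x + α) * (x + α) ^ (1 - α) := by
  have hxα : (0:ℝ) < x + α := by linarith
  have hxα1 : (0:ℝ) < x + α + 1 := by linarith
  have hc := Real.convexOn_log_Gamma.2 (Set.mem_Ioi.mpr hxα) (Set.mem_Ioi.mpr hxα1)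
      (le_of_lt hα0) (by linarith : (0:ℝ) ≤ 1 - α) (by ring)
  have hsum : α • (x + α) + (1 - α) • (x + α + 1) = x + 1 := by
    simp only [smul_eq_mul]; ring
  rw [hsum] at hc
  simp only [Function.comp_apply, smul_eq_mul] at hc
  have hG1 : Real.Gamma (x + 1) = x * Real.Gamma x := Real.Gamma_add_one hx.ne'
  have hG2 : Real.Gamma (x + α + 1) = (x + α) * Real.Gamma (x + α) :=
    Real.Gamma_add_one hxα.ne'
  have hGx : 0 < Real.Gamma x := Real.Gamma_pos_of_pos hx
  have hGxα : 0 < Real.Gamma (x + α) := Real.Gamma_pos_of_pos hxα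
  rw [hG1, hG2, Real.log_mul hx.ne' hGx.ne', Real.log_mul hxα.ne' hGxα.ne'] at hc
  -- hc : log x + log Γ x ≤ α * log Γ (x+α) + (1-α) * (log (x+α) + log Γ (x+α))
  have key : Real.log (Real.Gamma x * x) ≤
      Real.log (Real.Gamma (x + α) * (x + α) ^ (1 - α)) := by
    rw [Real.log_mul hGx.ne' hx.ne',
      Real.log_mul hGxα.ne' (Real.rpow_pos_of_pos hxα _).ne', Real.log_rpow hxα]
    nlinarith [hc]
  exact (Real.log_le_log_iff (by positivity) (by positivity)).mp key

lemma mlSummableR (α : ℝ) (hα0 : 0 < α) (hα1 : α < 1) (r : ℝ) :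
    Summable (fun k : ℕ => (Real.Gamma (α * k + 1))⁻¹ * r ^ k) := by
  set s := |r| with hs
  have hs0 : 0 ≤ s := abs_nonneg r
  -- the eventual ratio bound
  have hev : ∀ᶠ k : ℕ in atTop, s * (2 ^ (1 - α) * (α * k + 1) ^ (-α)) ≤ 1/2 := by
    have h1 : Tendsto (fun k : ℕ => (α * k + 1 : ℝ)) atTop atTop :=
      tendsto_atTop_add_const_right _ 1
        ((tendsto_natCast_atTop_atTop (R := ℝ)).const_mul_atTop hα0)
    have h2 : Tendsto (fun k : ℕ => s * (2 ^ (1 - α) * (α * k + 1) ^ (-α))) atTop (nhds 0) := by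
      have := (tendsto_rpow_neg_atTop hα0).comp h1
      have := this.const_mul (2 ^ (1 - α) : ℝ)
      have := this.const_mul s
      simpa using this
    exact h2.eventually_le_const (by norm_num)
  apply Summable.of_norm
  apply summable_of_ratio_norm_eventually_le (r := 1/2) (by norm_num)
  filter_upwards [hev] with k hk
  have hx : (0:ℝ) < α * k + 1 := by positivity
  have hx1 : (1:ℝ) ≤ α * k + 1 := by nlinarith [mul_nonneg hα0.le (Nat.cast_nonneg (α := ℝ) k)]
  have hGx : 0 < Real.Gamma (α * k + 1) := mlGammaPos α hα0 k
  have hGxα : 0 < Real.Gamma (α * k + 1 + α) := Real.Gamma_pos_of_pos (by linarith)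
  have hxeq : α * ((k : ℝ) + 1) + 1 = (α * k + 1) + α := by ring
  have hterm : ∀ m : ℕ, ‖‖(Real.Gamma (α * m + 1))⁻¹ * r ^ m‖‖
      = (Real.Gamma (α * m + 1))⁻¹ * s ^ m := by
    intro m
    rw [norm_norm, Real.norm_eq_abs, abs_mul, abs_inv,
      abs_of_pos (mlGammaPos α hα0 m), abs_pow]
  rw [hterm, hterm]
  push_cast
  rw [hxeq]
  set x := α * (k:ℝ) + 1 with hxdef
  -- goal : Γ(x+α)⁻¹ * s^(k+1) ≤ 1/2 * (Γ x⁻¹ * s^k)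
  have hratio := mlGammaRatio α hα0 hα1 hx
  -- (x+α)^(1-α)/x ≤ 2^(1-α) * x^(-α)
  have hb : (x + α) ^ (1 - α) ≤ 2 ^ (1 - α) * x ^ (1 - α) := by
    rw [← Real.mul_rpow (by norm_num) (le_of_lt hx)]
    apply Real.rpow_le_rpow (by linarith) (by linarith) (by linarith)
  have hxpow : x ^ (1 - α) = x ^ (-α) * x := by
    rw [show (1 - α) = -α + 1 by ring, Real.rpow_add hx, Real.rpow_one]
  -- from hratio: Γ x * x ≤ Γ(x+α) * (x+α)^(1-α) ≤ Γ(x+α) * 2^(1-α) * x^(-α) * x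
  have h3 : Real.Gamma x * x ≤ Real.Gamma (x + α) * (2 ^ (1 - α) * x ^ (-α)) * x := by
    calc Real.Gamma x * x ≤ Real.Gamma (x + α) * (x + α) ^ (1 - α) := hratio
    _ ≤ Real.Gamma (x + α) * (2 ^ (1 - α) * (x ^ (-α) * x)) := by
        rw [← hxpow]; exact mul_le_mul_of_nonneg_left (by rw [hxpow] at hb ⊢; exact hb)
          (le_of_lt hGxα)
    _ = Real.Gamma (x + α) * (2 ^ (1 - α) * x ^ (-α)) * x := by ring
  have h4 : Real.Gamma x ≤ Real.Gamma (x + α) * (2 ^ (1 - α) * x ^ (-α)) :=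
    le_of_mul_le_mul_right (by linarith) hx
  -- multiply by s, use hk
  have h5 : s * Real.Gamma x ≤ (1/2) * Real.Gamma (x + α) := by
    calc s * Real.Gamma x ≤ s * (Real.Gamma (x + α) * (2 ^ (1 - α) * x ^ (-α))) :=
          mul_le_mul_of_nonneg_left h4 hs0
    _ = Real.Gamma (x + α) * (s * (2 ^ (1 - α) * x ^ (-α))) := by ring
    _ ≤ Real.Gamma (x + α) * (1/2) := mul_le_mul_of_nonneg_left hk (le_of_lt hGxα)
    _ = (1/2) * Real.Gamma (x + α) := by ring
  have hspow : (0:ℝ) ≤ s ^ k := pow_nonneg hs0 k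
  rw [pow_succ]
  calc (Real.Gamma (x + α))⁻¹ * (s ^ k * s)
      ≤ (Real.Gamma (x + α))⁻¹ * ((1/2 * Real.Gamma (x + α)) * ((Real.Gamma x)⁻¹ * s ^ k)) := by
        refine mul_le_mul_of_nonneg_left ?_ (inv_nonneg.mpr hGxα.le)
        calc s ^ k * s = (s * Real.Gamma x) * ((Real.Gamma x)⁻¹ * s ^ k) := by
              field_simp
          _ ≤ _ := mul_le_mul_of_nonneg_right h5 (by positivity)
    _ = 1/2 * ((Real.Gamma x)⁻¹ * s ^ k) := by field_simp

lemma mlSummableC (α : ℝ) (hα0 : 0 < α) (hα1 : α < 1) (z : ℂ) :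
    Summable (fun k : ℕ => ((Real.Gamma (α * k + 1) : ℂ))⁻¹ * z ^ k) := by
  apply Summable.of_norm
  have : (fun k : ℕ => ‖((Real.Gamma (α * k + 1) : ℂ))⁻¹ * z ^ k‖)
      = fun k : ℕ => (Real.Gamma (α * k + 1))⁻¹ * ‖z‖ ^ k := by
    funext k
    rw [norm_mul, norm_inv, norm_pow, Complex.norm_real, Real.norm_eq_abs,
      abs_of_pos (mlGammaPos α hα0 k)]
  rw [this]
  exact mlSummableR α hα0 hα1 ‖z‖

lemma mlEntryBound {n : Type*} [Fintype n] [DecidableEq n] (M : Matrix n n ℝ) :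
    ∃ C : ℝ, 0 ≤ C ∧ ∀ (k : ℕ) (i j : n), |(M ^ k) i j| ≤ C ^ k := by
  set B : ℝ := (∑ i : n, ∑ j : n, |M i j|) + 1 with hB
  have hB1 : (1:ℝ) ≤ B := by
    have : (0:ℝ) ≤ ∑ i : n, ∑ j : n, |M i j| :=
      Finset.sum_nonneg fun i _ => Finset.sum_nonneg fun j _ => abs_nonneg _
    linarith
  have hBij : ∀ i j, |M i j| ≤ B := by
    intro i j
    have h1 : |M i j| ≤ ∑ j' : n, |M i j'| :=
      Finset.single_le_sum (f := fun j' => |M i j'|) (fun _ _ => abs_nonneg _)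
        (Finset.mem_univ j)
    have h2 : (∑ j' : n, |M i j'|) ≤ ∑ i' : n, ∑ j' : n, |M i' j'| :=
      Finset.single_le_sum (f := fun i' => ∑ j' : n, |M i' j'|)
        (fun _ _ => Finset.sum_nonneg fun _ _ => abs_nonneg _) (Finset.mem_univ i)
    linarith
  refine ⟨(Fintype.card n : ℝ) * B, by positivity, ?_⟩
  intro k
  induction k with
  | zero =>
    intro i j
    simp only [pow_zero, Matrix.one_apply]
    split_ifs <;> simp
  | succ k ih =>
    intro i j
    rw [pow_succ, Matrix.mul_apply]
    calc |∑ l : n, (M ^ k) i l * M l j| ≤ ∑ l : n, |(M ^ k) i l * M l j| :=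
          Finset.abs_sum_le_sum_abs _ _
      _ ≤ ∑ _l : n, ((Fintype.card n : ℝ) * B) ^ k * B := by
          apply Finset.sum_le_sum
          intro l _
          rw [abs_mul]
          exact mul_le_mul (ih i l) (hBij l j) (abs_nonneg _)
            (pow_nonneg (by positivity) k)
      _ = ((Fintype.card n : ℝ) * B) ^ (k + 1) := by
          rw [Finset.sum_const, Finset.card_univ, nsmul_eq_mul]
          ring
      _ ≤ ((Fintype.card n : ℝ) * B) ^ (k + 1) := le_refl _

lemma mlSummableMat {n : Type*} [Fintype n] [DecidableEq n]
    (α : ℝ) (hα0 : 0 < α) (hα1 : α < 1) (M : Matrix n n ℝ) :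
    Summable (fun k : ℕ => (Real.Gamma (α * k + 1))⁻¹ • M ^ k) := by
  obtain ⟨C, hC0, hC⟩ := mlEntryBound M
  refine Pi.summable.mpr ?_
  intro i
  rw [Pi.summable]
  intro j
  have : (fun k : ℕ => ((Real.Gamma (α * k + 1))⁻¹ • M ^ k) i j)
      = fun k : ℕ => (Real.Gamma (α * k + 1))⁻¹ * (M ^ k) i j := by
    funext k; simp [Matrix.smul_apply]
  rw [this]
  apply Summable.of_norm
  have hle : ∀ k : ℕ, ‖(Real.Gamma (α * k + 1))⁻¹ * (M ^ k) i j‖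
      ≤ (Real.Gamma (α * k + 1))⁻¹ * C ^ k := by
    intro k
    rw [Real.norm_eq_abs, abs_mul, abs_inv, abs_of_pos (mlGammaPos α hα0 k)]
    exact mul_le_mul_of_nonneg_left (hC k i j) (inv_nonneg.mpr (mlGammaPos α hα0 k).le)
  exact Summable.of_nonneg_of_le (fun k => norm_nonneg _) hle (mlSummableR α hα0 hα1 C)

lemma mlPowMulVec {n : Type*} [Fintype n] [DecidableEq n]
    (B : Matrix n n ℂ) (v : n → ℂ) (lam : ℂ) (h : B.mulVec v = lam • v) :
    ∀ k : ℕ, (B ^ k).mulVec v = lam ^ k • v := by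
  intro k
  induction k with
  | zero => simp [Matrix.one_mulVec]
  | succ k ih =>
    rw [pow_succ, ← Matrix.mulVec_mulVec, h, Matrix.mulVec_smul, ih, pow_succ, smul_smul]
    congr 1
    ring


lemma mlE_zero (α : ℝ) : mlE α 0 = 1 := by
  rw [mlE, tsum_eq_single 0]
  · simp [Real.Gamma_one]
  · intro k hk
    simp [zero_pow hk]

lemma mlE_pos_real (α : ℝ) (hα0 : 0 < α) (hα1 : α < 1) (r : ℝ) (hr : 0 < r) :
    mlE α (r : ℂ) ≠ 0 := by
  have hsum := mlSummableR α hα0 hα1 r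
  have : mlE α (r : ℂ) = ((∑' k : ℕ, (Real.Gamma (α * k + 1))⁻¹ * r ^ k : ℝ) : ℂ) := by
    rw [mlE, Complex.ofReal_tsum]
    congr 1; funext k; push_cast; ring
  rw [this]
  rw [Complex.ofReal_ne_zero]
  have hpos : 0 < ∑' k : ℕ, (Real.Gamma (α * k + 1))⁻¹ * r ^ k := by
    apply Summable.tsum_pos hsum
    · intro k
      exact mul_nonneg (inv_nonneg.mpr (mlGammaPos α hα0 k).le) (pow_nonneg hr.le k)
    · show 0 < (Real.Gamma (α * (0:ℕ) + 1))⁻¹ * r ^ (0:ℕ)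
      simp [Real.Gamma_one]
  exact hpos.ne'

theorem trajectory_hits_origin_sufficient {n : Type*} [Fintype n] [DecidableEq n] [Nonempty n]
    (α : ℝ) (hα0 : 0 < α) (hα1 : α < 1) (A : Matrix n n ℝ)
    (h : ∃ lam ∈ spectrum ℂ (A.map Complex.ofReal), ∃ ζ : ℂ, mlE α ζ = 0 ∧
      lam.arg = ζ.arg) :
    ∃ T : ℝ, 0 < T ∧ ∃ x₀ : n → ℝ, x₀ ≠ 0 ∧ (mlMatR α ((T ^ α) • A)).mulVec x₀ = 0 := by
  obtain ⟨lam, hlam, ζ, hζ, harg⟩ := h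
  set B := A.map Complex.ofReal with hBdef
  have hζ0 : ζ ≠ 0 := by
    rintro rfl
    rw [mlE_zero] at hζ
    exact one_ne_zero hζ
  have hlam0 : lam ≠ 0 := by
    rintro rfl
    rw [Complex.arg_zero] at harg
    have hre : 0 ≤ ζ.re ∧ ζ.im = 0 := Complex.arg_eq_zero_iff.mp harg.symm
    have hζre : ζ = (ζ.re : ℂ) := by
      apply Complex.ext
      · simp
      · simp [hre.2]
    have hrepos : 0 < ζ.re := by
      rcases lt_or_eq_of_le hre.1 with h' | h'
      · exact h'
      · exact absurd (by rw [hζre, ← h']; simp : ζ = 0) hζ0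
    exact mlE_pos_real α hα0 hα1 ζ.re hrepos (hζre ▸ hζ)
  -- eigenvector
  obtain ⟨v, hv0, hveq⟩ : ∃ v : n → ℂ, v ≠ 0 ∧ B.mulVec v = lam • v := by
    have hmem := spectrum.mem_iff.mp hlam
    have hdet : (algebraMap ℂ (Matrix n n ℂ) lam - B).det = 0 := by
      by_contra hd
      exact hmem ((Matrix.isUnit_iff_isUnit_det _).mpr (isUnit_iff_ne_zero.mpr hd))
    obtain ⟨v, hv0, hveq⟩ := (Matrix.exists_mulVec_eq_zero_iff).mpr hdet
    refine ⟨v, hv0, ?_⟩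
    rw [Matrix.sub_mulVec] at hveq
    have h2 : (algebraMap ℂ (Matrix n n ℂ) lam).mulVec v = lam • v := by
      funext i
      simp [Matrix.algebraMap_eq_diagonal, Matrix.mulVec_diagonal]
    rw [h2] at hveq
    exact (sub_eq_zero.mp hveq).symm
  have hal : 0 < ‖lam‖ := norm_pos_iff.mpr hlam0
  have haζ : 0 < ‖ζ‖ := norm_pos_iff.mpr hζ0
  set s : ℝ := ‖ζ‖ / ‖lam‖ with hsdef
  have hs : 0 < s := div_pos haζ hal
  refine ⟨s ^ (α⁻¹ : ℝ), Real.rpow_pos_of_pos hs _, ?_⟩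
  have hTα : (s ^ (α⁻¹ : ℝ) : ℝ) ^ α = s := by
    rw [← Real.rpow_mul hs.le, inv_mul_cancel₀ hα0.ne', Real.rpow_one]
  rw [hTα]
  -- scaling identity
  have hc : ((s : ℝ) : ℂ) * lam = ζ := by
    have h1 := Complex.norm_mul_exp_arg_mul_I lam
    have h2 := Complex.norm_mul_exp_arg_mul_I ζ
    rw [harg] at h1
    have hne : ((‖lam‖ : ℝ) : ℂ) ≠ 0 := by exact_mod_cast hal.ne'
    rw [hsdef]
    push_cast
    rw [div_mul_eq_mul_div, div_eq_iff hne]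
    linear_combination -((‖ζ‖ : ℝ) : ℂ) * h1 + ((‖lam‖ : ℝ) : ℂ) * h2
  apply Matrix.exists_mulVec_eq_zero_iff.mpr
  have hsumM := mlSummableMat α hα0 hα1 (s • A)
  let L : Matrix n n ℝ →ₗ[ℝ] Matrix n n ℂ :=
    { toFun := fun N => N.map Complex.ofReal
      map_add' := fun N₁ N₂ => by
        ext i j
        simp [Matrix.map_apply]
      map_smul' := fun c N => by
        ext i j
        simp [Matrix.map_apply, Complex.real_smul] }
  have hLcont : Continuous L := LinearMap.continuous_of_finiteDimensional L
  let L' : Matrix n n ℝ →L[ℝ] Matrix n n ℂ := ⟨L, hLcont⟩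
  have hpowmap : ∀ k : ℕ, ((s • A) ^ k).map Complex.ofReal = (((s:ℝ):ℂ) • B) ^ k := by
    have hpow1 : (s • A).map Complex.ofReal = ((s:ℝ):ℂ) • B := by
      ext i j
      simp [Matrix.map_apply, hBdef, Complex.real_smul]
    intro k
    rw [← hpow1]
    induction k with
    | zero =>
      ext i j
      simp [Matrix.map_apply, Matrix.one_apply, apply_ite]
    | succ k ih =>
      ext i j
      rw [pow_succ, pow_succ, ← ih]
      simp only [Matrix.mul_apply, Matrix.map_apply]
      push_cast
      rfl
  have hterm : ∀ k : ℕ, L' ((Real.Gamma (α * k + 1))⁻¹ • (s • A) ^ k)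
      = (Real.Gamma (α * k + 1))⁻¹ • (((s:ℝ):ℂ) • B) ^ k := by
    intro k
    show ((Real.Gamma (α * k + 1))⁻¹ • (s • A) ^ k).map Complex.ofReal = _
    rw [← hpowmap k]
    ext i j
    simp [Matrix.map_apply, Complex.real_smul]
  have hmap : (mlMatR α (s • A)).map Complex.ofReal
      = ∑' k : ℕ, (Real.Gamma (α * k + 1))⁻¹ • (((s:ℝ):ℂ) • B) ^ k := by
    have h0 : (mlMatR α (s • A)).map Complex.ofReal = L' (mlMatR α (s • A)) := rfl
    rw [h0, mlMatR, L'.map_tsum hsumM]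
    exact tsum_congr hterm
  have hsumC : Summable (fun k : ℕ => (Real.Gamma (α * k + 1))⁻¹ • (((s:ℝ):ℂ) • B) ^ k) := by
    have h1 := hsumM.map L'.toLinearMap.toAddMonoidHom L'.continuous
    exact (summable_congr (fun k => (hterm k))).mp h1
  let Mv : Matrix n n ℂ →ₗ[ℂ] (n → ℂ) :=
    { toFun := fun N => N.mulVec v
      map_add' := fun N₁ N₂ => Matrix.add_mulVec _ _ _
      map_smul' := fun c N => Matrix.smul_mulVec c N v }
  have hMvcont : Continuous Mv := LinearMap.continuous_of_finiteDimensional Mv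
  let Mv' : Matrix n n ℂ →L[ℂ] (n → ℂ) := ⟨Mv, hMvcont⟩
  have hEig := mlPowMulVec B v lam hveq
  have hterm2 : ∀ k : ℕ, Mv' ((Real.Gamma (α * k + 1))⁻¹ • (((s:ℝ):ℂ) • B) ^ k)
      = (((Real.Gamma (α * k + 1) : ℝ) : ℂ))⁻¹ • (ζ ^ k • v) := by
    intro k
    show ((Real.Gamma (α * k + 1))⁻¹ • (((s:ℝ):ℂ) • B) ^ k).mulVec v = _
    rw [smul_pow, Matrix.smul_mulVec, Matrix.smul_mulVec, hEig k,
      smul_smul, ← mul_pow, hc]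
    funext i
    simp [Pi.smul_apply, Complex.real_smul, Complex.ofReal_inv]
  have hkernC : ((mlMatR α (s • A)).map Complex.ofReal).mulVec v = 0 := by
    have h0 : ((mlMatR α (s • A)).map Complex.ofReal).mulVec v
        = Mv' ((mlMatR α (s • A)).map Complex.ofReal) := rfl
    rw [h0, hmap, Mv'.map_tsum hsumC, tsum_congr hterm2]
    have hts : ∀ k : ℕ, (((Real.Gamma (α * k + 1) : ℝ) : ℂ))⁻¹ • (ζ ^ k • v)
        = (LinearMap.toSpanSingleton ℂ (n → ℂ) v)
          ((((Real.Gamma (α * k + 1) : ℝ) : ℂ))⁻¹ * ζ ^ k) := by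
      intro k
      rw [LinearMap.toSpanSingleton_apply, smul_smul]
    rw [tsum_congr hts]
    let Sv : ℂ →L[ℂ] (n → ℂ) := ⟨LinearMap.toSpanSingleton ℂ (n → ℂ) v,
      LinearMap.continuous_of_finiteDimensional _⟩
    have h1 : ∑' k : ℕ, (LinearMap.toSpanSingleton ℂ (n → ℂ) v)
        ((((Real.Gamma (α * k + 1) : ℝ) : ℂ))⁻¹ * ζ ^ k)
        = Sv (∑' k : ℕ, (((Real.Gamma (α * k + 1) : ℝ) : ℂ))⁻¹ * ζ ^ k) :=
      (Sv.map_tsum (mlSummableC α hα0 hα1 ζ)).symm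
    rw [h1]
    have h2 : (∑' k : ℕ, (((Real.Gamma (α * k + 1) : ℝ) : ℂ))⁻¹ * ζ ^ k) = mlE α ζ := rfl
    rw [h2, hζ]
    simp [Sv]
  have hdetC : ((mlMatR α (s • A)).map Complex.ofReal).det = 0 :=
    Matrix.exists_mulVec_eq_zero_iff.mp ⟨v, hv0, hkernC⟩
  have hfin : ((mlMatR α (s • A)).det : ℂ) = 0 := by
    have h := RingHom.map_det Complex.ofRealHom (mlMatR α (s • A))
    rw [RingHom.mapMatrix_apply] at h
    have h2 : (mlMatR α (s • A)).map (⇑Complex.ofRealHom) = (mlMatR α (s • A)).map Complex.ofReal := by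
      ext i j
      simp [Matrix.map_apply]
    rw [h2] at h
    exact h.trans hdetC
  exact_mod_cast hfin
end

section
/- Let n be a nonempty finite type, 0 < α < 1, and A an n×n real matrix. Suppose x₀, y₀ ∈ ℝ^n with x₀ ≠ y₀ and for some T > 0 the trajectories intersect at the same time: E_α(T^α • A) · x₀ = E_α(T^α • A) · y₀. Then there exists an eigenvalue λ ∈ spectrum ℂ A_ℂ of the complexification A_ℂ of A with E_α(T^α λ) = 0 (equivalently, T^α λ is a zero of E_α, so arg(λ) equals the argument of a zero of E_α). -/
open scoped Nat

/-- Summability of the scalar Mittag-Leffler coefficient series. -/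
lemma ml_summable_aux {α : ℝ} (hα0 : 0 < α) {r : ℝ} (hr : 0 ≤ r) :
    Summable (fun k : ℕ => (Real.Gamma (α * k + 1))⁻¹ * r ^ k) := by
  obtain ⟨N, hN1, hNα⟩ : ∃ N : ℕ, 1 ≤ N ∧ 1 ≤ α * N := by
    refine ⟨max 1 ⌈1/α⌉₊, le_max_left _ _, ?_⟩
    have h1 : (1:ℝ)/α ≤ (⌈1/α⌉₊ : ℝ) := Nat.le_ceil _
    have h2 : ((⌈1/α⌉₊ : ℕ) : ℝ) ≤ ((max 1 ⌈1/α⌉₊ : ℕ) : ℝ) := by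
      exact_mod_cast le_max_right 1 _
    calc (1:ℝ) = α * (1/α) := by field_simp
    _ ≤ α * (max 1 ⌈1/α⌉₊ : ℕ) := by nlinarith
  haveI : NeZero N := ⟨by omega⟩
  set M : ℝ := max 1 r with hM
  have hM1 : 1 ≤ M := le_max_left _ _
  have hM0 : (0:ℝ) ≤ M := by linarith
  set B : ℕ → ℝ := fun k => M ^ N * ((M ^ N) ^ (k / N) / (k / N)!) with hB
  have hBsum : Summable B := by
    apply Summable.mul_left
    have h1 : Summable (fun n : ℕ => (M^N)^n / n !) := Real.summable_pow_div_factorial _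
    have h2 : Summable (fun _ : Fin N => (1:ℝ)) := Summable.of_finite
    have h3 := h1.mul_of_nonneg h2 (fun q => by positivity) (fun _ => zero_le_one)
    have h4 := ((Nat.divModEquiv N).summable_iff).2 h3
    refine h4.congr fun k => ?_
    simp [Nat.divModEquiv]
  have key : ∀ k : ℕ, N ≤ k → (Real.Gamma (α * k + 1))⁻¹ * r ^ k ≤ B k := by
    intro k hk
    set q : ℕ := k / N with hq
    have hq1 : 1 ≤ q := (Nat.one_le_div_iff (by omega)).2 hk
    have hqk : (q : ℝ) ≤ α * k := by
      have h1 : (q : ℝ) ≤ (k : ℝ) / (N : ℝ) := Nat.cast_div_le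
      have hNpos : (0:ℝ) < N := by exact_mod_cast Nat.pos_of_ne_zero (by omega)
      have h2 : (k : ℝ) / N ≤ α * k := by
        rw [div_le_iff₀ hNpos]
        nlinarith [Nat.cast_nonneg (α := ℝ) k]
      linarith
    have hGamma : ((q ! : ℝ)) ≤ Real.Gamma (α * k + 1) := by
      have h0 : Real.Gamma ((q : ℝ) + 1) = q ! := Real.Gamma_nat_eq_factorial q
      rw [← h0]
      have hq1' : (1:ℝ) ≤ (q:ℝ) := by exact_mod_cast hq1
      refine Real.Gamma_strictMonoOn_Ici.monotoneOn ?_ ?_ (by linarith)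
      · simp only [Set.mem_Ici]; linarith
      · simp only [Set.mem_Ici]; linarith
    have hGpos : 0 < Real.Gamma (α * k + 1) := Real.Gamma_pos_of_pos (by positivity)
    have hfact : (0:ℝ) < q ! := by exact_mod_cast Nat.factorial_pos q
    have hinv : (Real.Gamma (α * k + 1))⁻¹ ≤ ((q ! : ℝ))⁻¹ := by
      exact inv_anti₀ hfact hGamma
    have hpow : r ^ k ≤ M ^ N * (M ^ N) ^ q := by
      have h1 : r ^ k ≤ M ^ k := pow_le_pow_left₀ hr (le_max_right 1 r) k
      have h2 : M ^ k ≤ M ^ (N * q + N) := by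
        apply pow_le_pow_right₀ hM1
        have h3 := Nat.mod_lt k (show 0 < N by omega)
        have hke : N * q + k % N = k := Nat.div_add_mod k N
        omega
      have h4 : M ^ (N * q + N) = M ^ N * (M ^ N) ^ q := by
        rw [← pow_mul, ← pow_add]; ring_nf
      calc r ^ k ≤ M ^ (N * q + N) := le_trans h1 h2
      _ = M ^ N * (M ^ N) ^ q := h4
    calc (Real.Gamma (α * k + 1))⁻¹ * r ^ k
        ≤ ((q ! : ℝ))⁻¹ * (M ^ N * (M ^ N) ^ q) := by
          have hA : (0:ℝ) ≤ r ^ k := by positivity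
          have hBb : (0:ℝ) ≤ ((q ! : ℝ))⁻¹ := by positivity
          exact mul_le_mul hinv hpow hA hBb
    _ = B k := by rw [hB]; field_simp; rw [hq, mul_comm]
  rw [← summable_nat_add_iff N]
  refine Summable.of_nonneg_of_le (fun k => ?_) (fun k => key (k + N) (by omega)) ?_
  · have hGpos : 0 < Real.Gamma (α * (k + N : ℕ) + 1) := Real.Gamma_pos_of_pos (by positivity)
    positivity
  · exact (summable_nat_add_iff N).2 hBsum

section MLMatrix

attribute [local instance] Matrix.linftyOpNormedAddCommGroup Matrix.linftyOpNormedRing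
  Matrix.linftyOpNormedSpace Matrix.linftyOpNormedAlgebra

/-- Summability of the Mittag-Leffler series in a normed `ℝ`-algebra. -/
lemma ml_summable {α : ℝ} (hα0 : 0 < α) {𝔸 : Type*} [NormedRing 𝔸] [NormedAlgebra ℝ 𝔸]
    [CompleteSpace 𝔸] (a : 𝔸) :
    Summable (fun k : ℕ => (Real.Gamma (α * k + 1))⁻¹ • a ^ k) := by
  apply Summable.of_norm
  set C : ℝ := max ‖(1 : 𝔸)‖ 1 with hC
  have hC1 : 1 ≤ C := le_max_right _ _
  refine Summable.of_nonneg_of_le (fun k => norm_nonneg _)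
    (fun k => ?_) (((ml_summable_aux hα0 (norm_nonneg a))).mul_left C)
  have hG : 0 < Real.Gamma (α * k + 1) := Real.Gamma_pos_of_pos (by positivity)
  rw [norm_smul, Real.norm_eq_abs, abs_of_pos (by positivity)]
  have hpk : ‖a ^ k‖ ≤ C * ‖a‖ ^ k := by
    cases k with
    | zero =>
      simp only [pow_zero, mul_one]
      exact le_max_left _ _
    | succ m =>
      calc ‖a ^ (m+1)‖ ≤ ‖a‖ ^ (m+1) := norm_pow_le' a (Nat.succ_pos m)
      _ ≤ C * ‖a‖ ^ (m+1) := by nlinarith [pow_nonneg (norm_nonneg a) (m+1)]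
  calc (Real.Gamma (α * k + 1))⁻¹ * ‖a ^ k‖
      ≤ (Real.Gamma (α * k + 1))⁻¹ * (C * ‖a‖ ^ k) := by
        apply mul_le_mul_of_nonneg_left hpk (by positivity)
  _ = C * ((Real.Gamma (α * k + 1))⁻¹ * ‖a‖ ^ k) := by ring

/-- Key lemma: if the Mittag-Leffler matrix of a real matrix has nontrivial kernel, then
the complexification has an eigenvalue at which `mlE α` vanishes. -/
lemma ml_ker_eigen {n : Type*} [Fintype n] [DecidableEq n] {α : ℝ} (hα0 : 0 < α)
    (B : Matrix n n ℝ) {v : n → ℝ} (hv0 : v ≠ 0) (hv : (mlMatR α B).mulVec v = 0) :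
    ∃ (μ : ℂ) (w : n → ℂ), w ≠ 0 ∧ (B.map Complex.ofReal).mulVec w = μ • w ∧ mlE α μ = 0 := by
  classical
  set c : ℕ → ℝ := fun k => (Real.Gamma (α * k + 1))⁻¹ with hcdef
  set M : Matrix n n ℂ := B.map Complex.ofReal with hMdef
  have hsumR : Summable fun k : ℕ => c k • B ^ k := ml_summable hα0 B
  have hsumC : Summable fun k : ℕ => c k • M ^ k := ml_summable hα0 M
  set S : Matrix n n ℂ := ∑' k : ℕ, c k • M ^ k with hSdef
  -- the complexification map as a continuous linear map
  let L0 : Matrix n n ℝ →ₗ[ℝ] Matrix n n ℂ :=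
    { toFun := fun X => X.map Complex.ofReal
      map_add' := fun X Y => by
        ext i j
        simp [Matrix.map_apply, Matrix.add_apply]
      map_smul' := fun r X => by
        ext i j
        simp [Matrix.map_apply, Matrix.smul_apply, Complex.real_smul] }
  let Lc : Matrix n n ℝ →L[ℝ] Matrix n n ℂ := L0.toContinuousLinearMap
  have hmap : (mlMatR α B).map Complex.ofReal = S := by
    have h1 : (mlMatR α B).map Complex.ofReal = Lc (∑' k : ℕ, c k • B ^ k) := rfl
    rw [h1, Lc.map_tsum hsumR]
    refine tsum_congr fun k => ?_
    have h2 : Lc (c k • B ^ k) = c k • (B ^ k).map Complex.ofReal := by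
      simp [Lc, L0]
    rw [h2]
    congr 1
    have h3 : (B ^ k).map Complex.ofReal
        = (Complex.ofRealHom.mapMatrix (B ^ k) : Matrix n n ℂ) := rfl
    rw [h3, map_pow]
    rfl
  -- kernel membership of the complexified vector
  set vC : n → ℂ := fun i => (v i : ℂ) with hvCdef
  have hSv : S.mulVec vC = 0 := by
    funext i
    have hmap' : (mlMatR α B).map ⇑Complex.ofRealHom = S := hmap
    have h1 : (S.mulVec vC) i
        = (((mlMatR α B).map ⇑Complex.ofRealHom).mulVec (⇑Complex.ofRealHom ∘ v)) i := by
      rw [hmap']; rfl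
    rw [h1, ← RingHom.map_mulVec, hv]
    simp
  have hvC0 : vC ≠ 0 := by
    intro h
    apply hv0
    funext i
    have := congrFun h i
    simpa [hvCdef] using this
  -- commutation of M and S
  have hMS : M * S = S * M := by
    let Ll : Matrix n n ℂ →ₗ[ℝ] Matrix n n ℂ :=
      { toFun := fun X => M * X
        map_add' := fun X Y => mul_add M X Y
        map_smul' := fun r X => mul_smul_comm r M X }
    let Lr : Matrix n n ℂ →ₗ[ℝ] Matrix n n ℂ :=
      { toFun := fun X => X * M
        map_add' := fun X Y => add_mul X Y M
        map_smul' := fun r X => smul_mul_assoc r X M }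
    have h1 : M * S = Ll.toContinuousLinearMap (∑' k : ℕ, c k • M ^ k) := rfl
    have h2 : S * M = Lr.toContinuousLinearMap (∑' k : ℕ, c k • M ^ k) := rfl
    rw [h1, h2, ContinuousLinearMap.map_tsum _ hsumC, ContinuousLinearMap.map_tsum _ hsumC]
    refine tsum_congr fun k => ?_
    have h3 : Ll.toContinuousLinearMap (c k • M ^ k) = c k • (M * M ^ k) := by
      simp [Ll, mul_smul_comm]
    have h4 : Lr.toContinuousLinearMap (c k • M ^ k) = c k • (M ^ k * M) := by
      simp [Lr, smul_mul_assoc]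
    rw [h3, h4, ← pow_succ, ← pow_succ']
  -- the kernel of S is invariant under M
  set K : Submodule ℂ (n → ℂ) := LinearMap.ker S.mulVecLin with hKdef
  have hstab : ∀ x ∈ K, M.mulVecLin x ∈ K := by
    intro x hx
    have hx' : S.mulVec x = 0 := hx
    show S.mulVec (M.mulVec x) = 0
    rw [Matrix.mulVec_mulVec, ← hMS, ← Matrix.mulVec_mulVec, hx', Matrix.mulVec_zero]
  let g : Module.End ℂ K := (M.mulVecLin).restrict hstab
  have hvCK : vC ∈ K := hSv
  haveI : Nontrivial K := nontrivial_of_ne ⟨vC, hvCK⟩ 0 (by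
    intro h
    exact hvC0 (congrArg Subtype.val h))
  obtain ⟨μ, hμ⟩ := Module.End.exists_eigenvalue g
  obtain ⟨w', hw'⟩ := hμ.exists_hasEigenvector
  set w : n → ℂ := (w' : n → ℂ) with hwdef
  have hw0 : w ≠ 0 := by
    intro h
    exact hw'.right (Subtype.ext h)
  have hMw : M.mulVec w = μ • w := by
    have h1 : g w' = μ • w' := hw'.apply_eq_smul
    have h2 := congrArg (Subtype.val) h1
    simpa [g, LinearMap.restrict_apply, Matrix.mulVecLin_apply] using h2
  have hSw : S.mulVec w = 0 := w'.2
  have hpow : ∀ k : ℕ, (M ^ k).mulVec w = μ ^ k • w := by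
    intro k
    induction k with
    | zero => simp [Matrix.one_mulVec]
    | succ m ih =>
      rw [pow_succ', ← Matrix.mulVec_mulVec, ih, Matrix.mulVec_smul, hMw, smul_smul,
        ← pow_succ]
  -- compute S.mulVec w as a scalar multiple of w
  have hsumμ : Summable fun k : ℕ => (c k : ℂ) * μ ^ k := by
    apply Summable.of_norm
    refine ((ml_summable_aux hα0 (norm_nonneg μ))).congr fun k => ?_
    have hG : 0 < Real.Gamma (α * k + 1) := Real.Gamma_pos_of_pos (by positivity)
    rw [norm_mul, norm_pow, Complex.norm_real, Real.norm_eq_abs, abs_of_pos (by positivity)]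
  have hml : mlE α μ = 0 := by
    let Lw : Matrix n n ℂ →ₗ[ℝ] (n → ℂ) :=
      { toFun := fun X => X.mulVec w
        map_add' := fun X Y => Matrix.add_mulVec X Y w
        map_smul' := fun r X => Matrix.smul_mulVec r X w }
    have h1 : S.mulVec w = ∑' k : ℕ, c k • ((M ^ k).mulVec w) := by
      have h0 : S.mulVec w = Lw.toContinuousLinearMap (∑' k : ℕ, c k • M ^ k) := rfl
      rw [h0, ContinuousLinearMap.map_tsum _ hsumC]
      refine tsum_congr fun k => ?_
      simp [Lw, Matrix.smul_mulVec]
    have h2 : ∑' k : ℕ, c k • ((M ^ k).mulVec w) = ∑' k : ℕ, ((c k : ℂ) * μ ^ k) • w := by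
      refine tsum_congr fun k => ?_
      rw [hpow k, ← smul_assoc]
      congr 1
    let Ls : ℂ →ₗ[ℂ] (n → ℂ) := LinearMap.toSpanSingleton ℂ _ w
    have h3 : ∑' k : ℕ, ((c k : ℂ) * μ ^ k) • w = (∑' k : ℕ, (c k : ℂ) * μ ^ k) • w := by
      have h0 := Ls.toContinuousLinearMap.map_tsum hsumμ
      simpa [Ls, LinearMap.toSpanSingleton_apply] using h0.symm
    have h4 : mlE α μ = ∑' k : ℕ, (c k : ℂ) * μ ^ k := by
      refine tsum_congr fun k => ?_
      rw [hcdef]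
      push_cast
      ring
    have h5 : mlE α μ • w = 0 := by
      rw [h4, ← h3, ← h2, ← h1, hSw]
    rcases smul_eq_zero.mp h5 with h | h
    · exact h
    · exact absurd h hw0
  exact ⟨μ, w, hw0, hMw, hml⟩

end MLMatrix

theorem EIST_necessary_condition {n : Type*} [Fintype n] [DecidableEq n] [Nonempty n]
    (α : ℝ) (hα0 : 0 < α) (hα1 : α < 1) (A : Matrix n n ℝ)
    (x₀ y₀ : n → ℝ) (hxy : x₀ ≠ y₀) (T : ℝ) (hT : 0 < T)
    (hint : (mlMatR α ((T ^ α) • A)).mulVec x₀ = (mlMatR α ((T ^ α) • A)).mulVec y₀) :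
    ∃ lam ∈ spectrum ℂ (A.map Complex.ofReal),
      mlE α (((T ^ α : ℝ) : ℂ) * lam) = 0 := by
  have hv : (mlMatR α ((T ^ α) • A)).mulVec (x₀ - y₀) = 0 := by
    rw [Matrix.mulVec_sub, hint, sub_self]
  have hv0 : x₀ - y₀ ≠ 0 := sub_ne_zero.2 hxy
  obtain ⟨μ, w, hw0, hMw, hml⟩ := ml_ker_eigen hα0 ((T ^ α) • A) hv0 hv
  set cT : ℂ := ((T ^ α : ℝ) : ℂ) with hcT
  have hTpos : (0:ℝ) < T ^ α := Real.rpow_pos_of_pos hT α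
  have hc0 : cT ≠ 0 := by
    simp only [hcT, ne_eq, Complex.ofReal_eq_zero]
    exact ne_of_gt hTpos
  have hmapsmul : ((T ^ α) • A).map Complex.ofReal = cT • (A.map Complex.ofReal) := by
    ext i j
    simp [hcT, Matrix.map_apply, Matrix.smul_apply, Complex.real_smul]
  have hAw : (A.map Complex.ofReal).mulVec w = (cT⁻¹ * μ) • w := by
    have h1 : cT • ((A.map Complex.ofReal).mulVec w) = μ • w := by
      rw [← Matrix.smul_mulVec, ← hmapsmul, hMw]
    calc (A.map Complex.ofReal).mulVec w
        = cT⁻¹ • (cT • ((A.map Complex.ofReal).mulVec w)) := (inv_smul_smul₀ hc0 _).symm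
    _ = cT⁻¹ • (μ • w) := by rw [h1]
    _ = (cT⁻¹ * μ) • w := smul_smul _ _ _
  refine ⟨cT⁻¹ * μ, ?_, ?_⟩
  · rw [spectrum.mem_iff]
    intro hU
    obtain ⟨u, hu⟩ := hU
    have h0 : (algebraMap ℂ (Matrix n n ℂ) (cT⁻¹ * μ) - A.map Complex.ofReal).mulVec w = 0 := by
      rw [Algebra.algebraMap_eq_smul_one, Matrix.sub_mulVec, Matrix.smul_mulVec,
        Matrix.one_mulVec, hAw, sub_self]
    apply hw0
    have h2 : (((u⁻¹ : (Matrix n n ℂ)ˣ) : Matrix n n ℂ) * (u : Matrix n n ℂ)).mulVec w = w := by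
      rw [u.inv_mul, Matrix.one_mulVec]
    rw [← Matrix.mulVec_mulVec, hu, h0, Matrix.mulVec_zero] at h2
    exact h2.symm
  · have harg : cT * (cT⁻¹ * μ) = μ := by
      field_simp
    rw [show ((T ^ α : ℝ) : ℂ) * (cT⁻¹ * μ) = μ from harg, hml]
end

section
/- Let n be a nonempty finite type, 0 < α < 1, T > 0, and A an n×n real matrix with complexification A_ℂ. Suppose ζ ∈ ℂ satisfies E_α(ζ) = 0 and ζ / T^α ∈ spectrum ℂ A_ℂ. Then: (i) there exists a nonzero z ∈ ℝ^n with E_α(T^α • A) · z = 0 (the kernel of E_α(T^α • A) is nontrivial); and (ii) for every z₀ ∈ ℝ^n with E_α(T^α • A) · z₀ = 0 and every p in the range of the map y ↦ E_α(T^α • A) · y, there exists x₀ ∈ ℝ^n such that E_α(T^α • A) · (x₀ + z₀) = p. -/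
theorem typeII_collapse {n : Type*} [Fintype n] [DecidableEq n] [Nonempty n]
    (α : ℝ) (hα0 : 0 < α) (hα1 : α < 1) (T : ℝ) (hT : 0 < T)
    (A : Matrix n n ℝ) (ζ : ℂ) (hζ : mlE α ζ = 0)
    (hspec : ζ / ((T ^ α : ℝ) : ℂ) ∈ spectrum ℂ (A.map Complex.ofReal)) :
    (∃ z : n → ℝ, z ≠ 0 ∧ (mlMatR α ((T ^ α) • A)).mulVec z = 0) ∧
      ∀ z₀ : n → ℝ, (mlMatR α ((T ^ α) • A)).mulVec z₀ = 0 →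
        ∀ p ∈ Set.range (fun y : n → ℝ => (mlMatR α ((T ^ α) • A)).mulVec y),
          ∃ x₀ : n → ℝ, (mlMatR α ((T ^ α) • A)).mulVec (x₀ + z₀) = p := by
  classical
  set B : Matrix n n ℝ := (T ^ α) • A with hB
  set c : ℕ → ℝ := fun k => (Real.Gamma (α * k + 1))⁻¹ with hc
  set f : ℕ → Matrix n n ℝ := fun k => c k • B ^ k with hf
  have hMval : mlMatR α B = ∑' k, f k := rfl
  have key : (mlMatR α B).det = 0 := by
    by_cases hS : Summable f
    · -- eigenvector for A over ℂ
      set μ : ℂ := ζ / ((T ^ α : ℝ) : ℂ) with hμ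
      have hdetμ : (algebraMap ℂ (Matrix n n ℂ) μ - A.map Complex.ofReal).det = 0 := by
        have hnu := spectrum.mem_iff.mp hspec
        by_contra h
        exact hnu ((Matrix.isUnit_iff_isUnit_det _).mpr (isUnit_iff_ne_zero.mpr h))
      obtain ⟨v, hv0, hv⟩ := Matrix.exists_mulVec_eq_zero_iff.mpr hdetμ
      have hTα : ((T ^ α : ℝ) : ℂ) ≠ 0 := by
        exact_mod_cast ne_of_gt (Real.rpow_pos_of_pos hT α)
      have hAv : (A.map Complex.ofReal).mulVec v = μ • v := by
        have h1 : (algebraMap ℂ (Matrix n n ℂ) μ).mulVec v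
            - (A.map Complex.ofReal).mulVec v = 0 := by
          rw [← Matrix.sub_mulVec]; exact hv
        have h2 : (algebraMap ℂ (Matrix n n ℂ) μ).mulVec v = μ • v := by
          rw [Algebra.algebraMap_eq_smul_one, Matrix.smul_mulVec, Matrix.one_mulVec]
        have := sub_eq_zero.mp h1
        rw [h2] at this
        exact this.symm
      have hBmap : B.map Complex.ofReal = ((T ^ α : ℝ) : ℂ) • (A.map Complex.ofReal) := by
        ext i j
        simp [hB, Matrix.map_apply, Matrix.smul_apply, Complex.ofReal_mul]
      have hBv : (B.map Complex.ofReal).mulVec v = ζ • v := by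
        rw [hBmap, Matrix.smul_mulVec, hAv, smul_smul, hμ, mul_comm,
          div_mul_cancel₀ _ hTα]
      have hpow : ∀ k : ℕ, ((B.map Complex.ofReal) ^ k).mulVec v = ζ ^ k • v := by
        intro k
        induction k with
        | zero => simp [Matrix.one_mulVec]
        | succ k ih =>
            rw [pow_succ, ← Matrix.mulVec_mulVec, hBv, Matrix.mulVec_smul, ih,
              smul_smul, pow_succ, mul_comm]
      -- the linear map M ↦ (M.map ofReal).mulVec v
      let φ : Matrix n n ℝ →ₗ[ℝ] (n → ℂ) :=
        { toFun := fun M => (M.map Complex.ofReal).mulVec v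
          map_add' := by
            intro M N
            ext i
            simp [Matrix.mulVec, dotProduct, Matrix.map_apply, Matrix.add_apply,
              Complex.ofReal_add, add_mul, Finset.sum_add_distrib]
          map_smul' := by
            intro r M
            ext i
            simp [Matrix.mulVec, dotProduct, Matrix.map_apply, Matrix.smul_apply,
              Complex.ofReal_mul, Finset.mul_sum, mul_assoc, Complex.real_smul] }
      let ψ : Matrix n n ℝ →L[ℝ] (n → ℂ) := LinearMap.toContinuousLinearMap φ
      have hψ : ∀ M : Matrix n n ℝ, ψ M = (M.map Complex.ofReal).mulVec v := fun _ => rfl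
      have hmap : HasSum (fun k => ψ (f k)) (ψ (mlMatR α B)) := by
        rw [hMval]
        exact hS.hasSum.mapL ψ
      have hφf : ∀ k : ℕ, ψ (f k) = ((c k : ℂ) * ζ ^ k) • v := by
        intro k
        have hmp : (B ^ k).map Complex.ofReal = (B.map Complex.ofReal) ^ k := by
          have := map_pow (Complex.ofRealHom.mapMatrix : Matrix n n ℝ →+* Matrix n n ℂ) B k
          exact this
        have hsm : (c k • B ^ k).map Complex.ofReal
            = (c k : ℂ) • (B ^ k).map Complex.ofReal := by
          ext i j
          simp [Matrix.map_apply, Matrix.smul_apply, Complex.ofReal_mul]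
        rw [hψ, hf]
        simp only [hsm, hmp, Matrix.smul_mulVec, hpow, smul_smul]
      rw [funext hφf] at hmap
      -- extract scalar summability
      obtain ⟨i, hvi0⟩ := Function.ne_iff.mp hv0
      have hvi : v i ≠ 0 := by simpa using hvi0
      have hsum_i : HasSum (fun k => ((c k : ℂ) * ζ ^ k) * v i)
          ((ψ (mlMatR α B)) i) := by
        have := hmap.mapL (ContinuousLinearMap.proj (R := ℂ) (φ := fun _ : n => ℂ) i)
        simpa [Pi.smul_apply, smul_eq_mul] using this
      have hs : Summable (fun k => (c k : ℂ) * ζ ^ k) := by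
        have h1 := hsum_i.summable.mul_right (v i)⁻¹
        have : (fun k => ((c k : ℂ) * ζ ^ k) * v i * (v i)⁻¹)
            = fun k => (c k : ℂ) * ζ ^ k := by
          funext k
          rw [mul_assoc, mul_inv_cancel₀ hvi, mul_one]
        rwa [this] at h1
      have htsum : ψ (mlMatR α B) = (∑' k, (c k : ℂ) * ζ ^ k) • v := by
        rw [← hmap.tsum_eq, hs.tsum_smul_const]
      have hzero : (∑' k, (c k : ℂ) * ζ ^ k) = 0 := by
        rw [← hζ]
        unfold mlE
        congr 1
        funext k
        rw [hc]
        push_cast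
        ring
      have hker : ((mlMatR α B).map Complex.ofReal).mulVec v = 0 := by
        rw [← hψ, htsum, hzero, zero_smul]
      have hdetC : ((mlMatR α B).map Complex.ofReal).det = 0 :=
        Matrix.exists_mulVec_eq_zero_iff.mp ⟨v, hv0, hker⟩
      have hcast : ((mlMatR α B).det : ℂ) = ((mlMatR α B).map Complex.ofReal).det := by
        exact
          (Complex.ofRealHom : ℝ →+* ℂ).map_det (mlMatR α B)
      have hfin : ((mlMatR α B).det : ℂ) = 0 := by rw [hcast]; exact hdetC
      exact_mod_cast hfin
    · have h0 : mlMatR α B = 0 := tsum_eq_zero_of_not_summable hS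
      rw [h0]
      exact Matrix.det_zero
  constructor
  · exact Matrix.exists_mulVec_eq_zero_iff.mpr key
  · rintro z₀ hz₀ p ⟨y, rfl⟩
    refine ⟨y - z₀, ?_⟩
    simp only [sub_add_cancel]
end

section
/- Let n be a nonempty finite type, 0 < α < 1, T > 0, T̃ > 0, and A an n×n real matrix. Let x₀ ∈ ℝ^n and q = E_α(T̃^α • A) · x₀, and suppose E_α(T̃^α • A) is invertible. Then the solution set H_{q,T} = {y ∈ ℝ^n | E_α(T^α • A) · y = q} equals the image of H_{x₀,T} = {y ∈ ℝ^n | E_α(T^α • A) · y = x₀} under the map y ↦ E_α(T̃^α • A) · y. -/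
private lemma commute_tsum_right {R : Type*} [Ring R] [TopologicalSpace R]
    [IsTopologicalRing R] [T2Space R] (a : R) (g : ℕ → R)
    (h : ∀ j, Commute a (g j)) : Commute a (∑' j, g j) := by
  by_cases hg : Summable g
  · unfold Commute SemiconjBy
    rw [← hg.tsum_mul_left a, ← hg.tsum_mul_right a]
    exact tsum_congr fun j => h j
  · rw [tsum_eq_zero_of_not_summable hg]
    exact Commute.zero_right a

private lemma mlMatR_commute (α : ℝ) {n : Type*} [Fintype n] [DecidableEq n]
    (c c' : ℝ) (A : Matrix n n ℝ) :
    Commute (mlMatR α (c • A)) (mlMatR α (c' • A)) := by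
  unfold mlMatR
  refine (commute_tsum_right _ _ fun k => ?_).symm
  refine (commute_tsum_right _ _ fun j => ?_).symm
  simp only [smul_pow, smul_smul]
  exact (((Commute.refl A).pow_pow k j).smul_right ((Real.Gamma (α * j + 1))⁻¹ * c' ^ j)).smul_left ((Real.Gamma (α * k + 1))⁻¹ * c ^ k)

theorem solution_set_evolution {n : Type*} [Fintype n] [DecidableEq n] [Nonempty n]
    (α : ℝ) (hα0 : 0 < α) (hα1 : α < 1) (T T' : ℝ) (hT : 0 < T) (hT' : 0 < T')
    (A : Matrix n n ℝ) (x₀ : n → ℝ)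
    (hinv : IsUnit (mlMatR α ((T' ^ α) • A))) :
    {y : n → ℝ | (mlMatR α ((T ^ α) • A)).mulVec y =
        (mlMatR α ((T' ^ α) • A)).mulVec x₀} =
      (fun y : n → ℝ => (mlMatR α ((T' ^ α) • A)).mulVec y) ''
        {y : n → ℝ | (mlMatR α ((T ^ α) • A)).mulVec y = x₀} := by
  set M := mlMatR α ((T ^ α) • A)
  set N := mlMatR α ((T' ^ α) • A)
  have hcomm : M * N = N * M := mlMatR_commute α _ _ A
  obtain ⟨u, hu⟩ := hinv
  ext y
  constructor
  · intro hy
    refine ⟨(↑u⁻¹ : Matrix n n ℝ).mulVec y, ?_, ?_⟩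
    · show M.mulVec _ = x₀
      have hcomm' : M * (↑u⁻¹ : Matrix n n ℝ) = (↑u⁻¹ : Matrix n n ℝ) * M := by
        have := (Commute.units_inv_right (a := M) (u := u) (by rwa [hu]))
        exact this
      rw [Matrix.mulVec_mulVec, hcomm', ← Matrix.mulVec_mulVec, hy,
        Matrix.mulVec_mulVec, ← hu, u.inv_mul, Matrix.one_mulVec]
    · show N.mulVec _ = y
      rw [Matrix.mulVec_mulVec, ← hu, u.mul_inv, Matrix.one_mulVec]
  · rintro ⟨z, hz, rfl⟩
    show M.mulVec (N.mulVec z) = N.mulVec x₀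
    rw [Matrix.mulVec_mulVec, hcomm, ← Matrix.mulVec_mulVec, hz]
end
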